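/- The expected first-edge occupation time grows logarithmically in the perturbation: lim_{δ→0⁺} E(δ)/log(1/δ) = 2, where E(δ) := ∑_{n=1}^∞ P_δ(n). -/

import Mathlib

open scoped BigOperators
open Filter Set

/-- `P δ n = ℙ(τ ≥ n)` for the perturbed 1-d senile reinforced random walk
(`P δ 1 = 1` since the product is empty). -/
noncomputable def P (δ : ℝ) (n : ℕ) : ℝ :=
  ∏ k ∈ Finset.Icc 2 n, ((k : ℝ) / ((k : ℝ) + 1) - δ)

/-- Telescoping product. -/
lemma prod_ratio (n : ℕ) :
    ∏ k ∈ Finset.Icc 2 (n + 1), ((k : ℝ) / ((k : ℝ) + 1)) = 2 / ((n : ℝ) + 2) := by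
  induction n with
  | zero => simp
  | succ n ih =>
    rw [show n + 1 + 1 = (n + 1) + 1 from rfl, Finset.prod_Icc_succ_top (by omega), ih]
    push_cast
    have h1 : (n : ℝ) + 2 ≠ 0 := by positivity
    have h2 : (n : ℝ) + 1 + 1 + 1 ≠ 0 := by positivity
    field_simp
    ring

/-- Closed form for the geometric-harmonic series. -/
lemma hasSum_aux {r : ℝ} (h0 : 0 < r) (h1 : r < 1) :
    HasSum (fun n : ℕ => 2 / ((n : ℝ) + 2) * r ^ n)
      (2 * (-Real.log (1 - r) - r) / r ^ 2) := by
  have hr : r ≠ 0 := ne_of_gt h0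
  have H := Real.hasSum_pow_div_log_of_abs_lt_one (x := r) (by rw [abs_of_pos h0]; exact h1)
  have H2 : HasSum (fun n : ℕ => r ^ (n + 1 + 1) / ((n : ℝ) + 1 + 1))
      (-Real.log (1 - r) - ∑ i ∈ Finset.range 1, r ^ (i + 1) / ((i : ℝ) + 1)) := by
    have := (hasSum_nat_add_iff' (f := fun n : ℕ => r ^ (n + 1) / ((n : ℝ) + 1)) 1).2 H
    convert this using 2 with n
    · rfl
    push_cast
    ring_nf
  simp only [Finset.range_one, Finset.sum_singleton, pow_one, Nat.cast_zero, zero_add,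
    div_one] at H2
  have H3 := H2.mul_left (2 / r ^ 2)
  have hfun : (fun n : ℕ => 2 / ((n : ℝ) + 2) * r ^ n)
      = fun n : ℕ => 2 / r ^ 2 * (r ^ (n + 1 + 1) / ((n : ℝ) + 1 + 1)) := by
    funext n
    have hn : (n : ℝ) + 2 ≠ 0 := by positivity
    have hn2 : (n : ℝ) + 1 + 1 ≠ 0 := by positivity
    field_simp
    ring
  rw [hfun, show 2 * (-Real.log (1 - r) - r) / r ^ 2
      = 2 / r ^ 2 * (-Real.log (1 - r) - r) by ring]
  exact H3

lemma P_le {δ : ℝ} (hδ0 : 0 < δ) (hδ1 : δ < 1/3) (n : ℕ) :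
    P δ (n + 1) ≤ 2 / ((n : ℝ) + 2) * (1 - δ) ^ n := by
  have key : 2 / ((n : ℝ) + 2) * (1 - δ) ^ n
      = ∏ k ∈ Finset.Icc 2 (n + 1), ((k : ℝ) / ((k : ℝ) + 1) * (1 - δ)) := by
    rw [Finset.prod_mul_distrib, Finset.prod_const, prod_ratio, Nat.card_Icc,
      show n + 1 + 1 - 2 = n by omega]
  rw [key, P]
  apply Finset.prod_le_prod
  · intro k hk
    have hk2 : 2 ≤ k := (Finset.mem_Icc.1 hk).1
    have hx : (2 : ℝ) ≤ (k : ℝ) := by exact_mod_cast hk2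
    have hx1 : (0 : ℝ) < (k : ℝ) + 1 := by linarith
    have h23 : (2 : ℝ) / 3 ≤ (k : ℝ) / ((k : ℝ) + 1) := by
      rw [div_le_div_iff₀ (by norm_num) hx1]; linarith
    linarith
  · intro k hk
    have hk2 : 2 ≤ k := (Finset.mem_Icc.1 hk).1
    have hx : (2 : ℝ) ≤ (k : ℝ) := by exact_mod_cast hk2
    have hx1 : (0 : ℝ) < (k : ℝ) + 1 := by linarith
    have hle1 : (k : ℝ) / ((k : ℝ) + 1) ≤ 1 := by
      rw [div_le_one hx1]; linarith
    have : δ * ((k : ℝ) / ((k : ℝ) + 1)) ≤ δ * 1 :=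
      mul_le_mul_of_nonneg_left hle1 hδ0.le
    nlinarith

lemma le_P {δ : ℝ} (hδ0 : 0 < δ) (hδ1 : δ < 1/3) (n : ℕ) :
    2 / ((n : ℝ) + 2) * (1 - 3/2 * δ) ^ n ≤ P δ (n + 1) := by
  have key : 2 / ((n : ℝ) + 2) * (1 - 3/2 * δ) ^ n
      = ∏ k ∈ Finset.Icc 2 (n + 1), ((k : ℝ) / ((k : ℝ) + 1) * (1 - 3/2 * δ)) := by
    rw [Finset.prod_mul_distrib, Finset.prod_const, prod_ratio, Nat.card_Icc,
      show n + 1 + 1 - 2 = n by omega]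
  rw [key, P]
  apply Finset.prod_le_prod
  · intro k hk
    have hk2 : 2 ≤ k := (Finset.mem_Icc.1 hk).1
    have hx : (2 : ℝ) ≤ (k : ℝ) := by exact_mod_cast hk2
    have hx1 : (0 : ℝ) < (k : ℝ) + 1 := by linarith
    have h23 : (0 : ℝ) ≤ (k : ℝ) / ((k : ℝ) + 1) := by positivity
    nlinarith
  · intro k hk
    have hk2 : 2 ≤ k := (Finset.mem_Icc.1 hk).1
    have hx : (2 : ℝ) ≤ (k : ℝ) := by exact_mod_cast hk2
    have hx1 : (0 : ℝ) < (k : ℝ) + 1 := by linarith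
    have h23 : (2 : ℝ) / 3 ≤ (k : ℝ) / ((k : ℝ) + 1) := by
      rw [div_le_div_iff₀ (by norm_num) hx1]; linarith
    nlinarith

lemma P_nonneg {δ : ℝ} (hδ1 : δ < 1/3) (n : ℕ) : 0 ≤ P δ n := by
  apply Finset.prod_nonneg
  intro k hk
  have hk2 : 2 ≤ k := (Finset.mem_Icc.1 hk).1
  have hx : (2 : ℝ) ≤ (k : ℝ) := by exact_mod_cast hk2
  have hx1 : (0 : ℝ) < (k : ℝ) + 1 := by linarith
  have h23 : (2 : ℝ) / 3 ≤ (k : ℝ) / ((k : ℝ) + 1) := by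
    rw [div_le_div_iff₀ (by norm_num) hx1]; linarith
  linarith

lemma summable_P {δ : ℝ} (hδ0 : 0 < δ) (hδ1 : δ < 1/3) :
    Summable (fun n : ℕ => P δ (n + 1)) := by
  apply Summable.of_nonneg_of_le (fun n => P_nonneg hδ1 (n + 1)) (P_le hδ0 hδ1)
  exact (hasSum_aux (by linarith) (by linarith)).summable

/-- Asymptotics of the explicit bound. -/
lemma tendsto_aux (c : ℝ) (hc : 0 < c) :
    Tendsto (fun δ : ℝ =>
        (2 * (-Real.log (c * δ) - (1 - c * δ)) / (1 - c * δ) ^ 2) / Real.log (1 / δ))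
      (nhdsWithin 0 (Set.Ioi 0)) (nhds 2) := by
  have hL : Tendsto (fun δ : ℝ => Real.log (1 / δ)) (nhdsWithin 0 (Set.Ioi 0)) atTop := by
    apply Real.tendsto_log_atTop.comp
    exact (tendsto_inv_nhdsGT_zero (𝕜 := ℝ)).congr (fun x => (one_div x).symm)
  have hA : Tendsto (fun δ : ℝ => -Real.log c - 1 + c * δ) (nhdsWithin 0 (Set.Ioi 0))
      (nhds (-Real.log c - 1)) := by
    have : Tendsto (fun δ : ℝ => -Real.log c - 1 + c * δ) (nhds 0)
        (nhds (-Real.log c - 1 + c * 0)) := by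
      apply Tendsto.const_add
      exact (continuous_const.mul continuous_id).tendsto 0
    rw [mul_zero, add_zero] at this
    exact this.mono_left nhdsWithin_le_nhds
  have h1 : Tendsto (fun δ : ℝ => (-Real.log c - 1 + c * δ) / Real.log (1 / δ))
      (nhdsWithin 0 (Set.Ioi 0)) (nhds 0) := hA.div_atTop hL
  have h2 : Tendsto (fun δ : ℝ => 2 / (1 - c * δ) ^ 2) (nhdsWithin 0 (Set.Ioi 0)) (nhds 2) := by
    have h2' : Tendsto (fun δ : ℝ => 2 / (1 - c * δ) ^ 2) (nhds 0)
        (nhds (2 / (1 - c * 0) ^ 2)) := by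
      apply Tendsto.div tendsto_const_nhds
      · exact (((continuous_const.sub (continuous_const.mul continuous_id)).pow 2).tendsto 0)
      · norm_num
    rw [mul_zero, sub_zero, one_pow, div_one] at h2'
    exact h2'.mono_left nhdsWithin_le_nhds
  have hmain : Tendsto (fun δ : ℝ =>
      (2 / (1 - c * δ) ^ 2) * (1 + (-Real.log c - 1 + c * δ) / Real.log (1 / δ)))
      (nhdsWithin 0 (Set.Ioi 0)) (nhds 2) := by
    have h3 := h2.mul ((tendsto_const_nhds (x := (1:ℝ))).add h1)
    rw [add_zero, mul_one] at h3
    exact h3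
  apply hmain.congr'
  have hmem : Set.Ioo (0:ℝ) (min (1/(2*c)) (1/2)) ∈ nhdsWithin (0:ℝ) (Set.Ioi 0) := by
    apply Ioo_mem_nhdsGT_of_mem
    refine ⟨le_refl 0, ?_⟩
    apply lt_min <;> positivity
  filter_upwards [hmem] with δ hδ
  obtain ⟨hδ0, hδlt⟩ := hδ
  have hδc : c * δ < 1/2 := by
    have h := lt_of_lt_of_le hδlt (min_le_left _ _)
    calc c * δ < c * (1/(2*c)) := by exact mul_lt_mul_of_pos_left h hc
    _ = 1/2 := by field_simp
  have hδ1 : δ < 1 := lt_of_lt_of_le hδlt (le_trans (min_le_right _ _) (by norm_num))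
  have hLpos : 0 < Real.log (1 / δ) := by
    apply Real.log_pos
    rw [lt_div_iff₀ hδ0]; linarith
  have hlogc : Real.log (c * δ) = Real.log c - Real.log (1 / δ) := by
    rw [Real.log_mul (ne_of_gt hc) (ne_of_gt hδ0), Real.log_div one_ne_zero (ne_of_gt hδ0),
      Real.log_one]
    ring
  have hne : (1 - c * δ) ≠ 0 := by linarith
  have hLne : Real.log (1 / δ) ≠ 0 := ne_of_gt hLpos
  rw [hlogc]
  field_simp
  ring

/-- `E(δ) = ∑_{n=1}^∞ P_δ(n) = 𝔼[τ]` grows logarithmically: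
`lim_{δ→0⁺} E(δ)/log(1/δ) = 2`. -/
theorem expectation_tau_log_asymptotics :
    Tendsto (fun δ : ℝ => (∑' n : ℕ, P δ (n + 1)) / Real.log (1/δ))
      (nhdsWithin 0 (Set.Ioi 0)) (nhds 2) := by
  have hlow := tendsto_aux (3/2) (by norm_num)
  have hup := tendsto_aux 1 (by norm_num)
  simp only [one_mul] at hup
  have hmem : Set.Ioo (0:ℝ) (1/3) ∈ nhdsWithin (0:ℝ) (Set.Ioi 0) :=
    Ioo_mem_nhdsGT_of_mem ⟨le_refl 0, by norm_num⟩
  apply tendsto_of_tendsto_of_tendsto_of_le_of_le' hlow hup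
  · filter_upwards [hmem] with δ hδ
    obtain ⟨hδ0, hδ1⟩ := hδ
    have hLpos : 0 < Real.log (1 / δ) := by
      apply Real.log_pos
      rw [lt_div_iff₀ hδ0]; linarith
    have hr0 : (0:ℝ) < 1 - 3/2 * δ := by linarith
    have hr1 : (1:ℝ) - 3/2 * δ < 1 := by linarith
    have hs := hasSum_aux hr0 hr1
    rw [show (1 - (1 - 3/2 * δ)) = 3/2 * δ by ring] at hs
    have hb : 2 * (-Real.log (3/2 * δ) - (1 - 3/2 * δ)) / (1 - 3/2 * δ) ^ 2
        ≤ ∑' n : ℕ, P δ (n + 1) := by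
      rw [← hs.tsum_eq]
      exact Summable.tsum_le_tsum (le_P hδ0 hδ1) hs.summable (summable_P hδ0 hδ1)
    exact div_le_div_of_nonneg_right hb hLpos.le
  · filter_upwards [hmem] with δ hδ
    obtain ⟨hδ0, hδ1⟩ := hδ
    have hLpos : 0 < Real.log (1 / δ) := by
      apply Real.log_pos
      rw [lt_div_iff₀ hδ0]; linarith
    have hr0 : (0:ℝ) < 1 - δ := by linarith
    have hr1 : (1:ℝ) - δ < 1 := by linarith
    have hs := hasSum_aux hr0 hr1
    rw [show (1 - (1 - δ)) = δ by ring] at hs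
    have hb : (∑' n : ℕ, P δ (n + 1))
        ≤ 2 * (-Real.log δ - (1 - δ)) / (1 - δ) ^ 2 := by
      rw [← hs.tsum_eq]
      exact Summable.tsum_le_tsum (P_le hδ0 hδ1) (summable_P hδ0 hδ1) hs.summable
    exact div_le_div_of_nonneg_right hb hLpos.le
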